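/- (Lemma 1, closed form.) Let P, Q ≥ 1 be integers and N = P·Q. Let α₁, α₂ ≥ 0 with α₁² + α₂² = 1, let ρ > 0, let R > 0 be the target rate, set ε = 2^R − 1 and assume τ := α₁² − α₂²·ε > 0, and set ξ = Q·ε/(ρ·τ). Let Z₁, …, Z_P be independent and identically distributed real random variables, each distributed as the product X·Y of independent X ~ Gamma(Q,1) and Y ~ Exp(1). Then the probability that log₂(1 + α₁²·(Z_p/Q)/(α₂²·(Z_p/Q) + 1/ρ)) < R holds simultaneously for all p = 1, …, P equals (ξ^{N/2}/Γ(Q)^P)·(ξ^{−Q/2}·Γ(Q) − 2·K_Q(2·√ξ))^P. -/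

import Mathlib

open MeasureTheory ProbabilityTheory

/-- The modified Bessel function of the second kind, via its integral representation
`K_ν(x) = ∫₀^∞ exp(−x cosh t) cosh(ν t) dt`. -/
noncomputable def besselK (ν x : ℝ) : ℝ :=
  ∫ t in Set.Ioi (0 : ℝ), Real.exp (-x * Real.cosh t) * Real.cosh (ν * t)

open Real Set

lemma integrable_comp_abs' {f : ℝ → ℝ} (hf : IntegrableOn f (Ioi 0)) :
    Integrable (fun x : ℝ => f |x|) := by
  have hIoi : IntegrableOn (fun x : ℝ => f |x|) (Ioi 0) :=
    hf.congr_fun (fun x hx => by rw [abs_of_pos hx]) measurableSet_Ioi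
  have hIic : IntegrableOn (fun x : ℝ => f |x|) (Iic 0) := by
    rw [← Measure.map_neg_eq_self (volume : Measure ℝ)]
    have m : MeasurableEmbedding fun x : ℝ => -x := (Homeomorph.neg ℝ).measurableEmbedding
    rw [m.integrableOn_map_iff]
    simp_rw [Function.comp_def, abs_neg, neg_preimage, neg_Iic, neg_zero]
    exact (integrableOn_Ici_iff_integrableOn_Ioi).mpr hIoi
  have := hIic.union hIoi
  rwa [Iic_union_Ioi, integrableOn_univ] at this

lemma integrable_exp_mul_sub_cosh (ν c : ℝ) (hc : 0 < c) :
    Integrable (fun t : ℝ => Real.exp (ν * t - c * Real.cosh t)) := by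
  have key : ∀ t : ℝ, Real.exp (ν * t - c * Real.cosh t) ≤
      Real.exp (2 * (|ν| + 1) ^ 2 / c) * Real.exp (-|t|) := by
    intro t
    rw [← Real.exp_add]
    apply Real.exp_le_exp.mpr
    have habs : ν * t ≤ |ν| * |t| := (le_abs_self _).trans (abs_mul _ _).le
    have hcosh : t ^ 2 / 8 ≤ Real.cosh t := by
      have h1 : 1 + |t| / 2 ≤ Real.exp (|t| / 2) := by
        linarith [Real.add_one_le_exp (|t| / 2)]
      have h2 : Real.exp (|t| / 2) ^ 2 = Real.exp |t| := by
        rw [sq, ← Real.exp_add, add_halves]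
      have h3 : Real.exp |t| / 2 ≤ Real.cosh t := by
        rw [← Real.cosh_abs, Real.cosh_eq]
        linarith [(Real.exp_pos (-|t|)).le]
      nlinarith [abs_nonneg t, (Real.exp_pos (|t| / 2)).le, sq_abs t]
    have h8 : c * (t ^ 2 / 8) ≤ c * Real.cosh t :=
      mul_le_mul_of_nonneg_left hcosh hc.le
    have hq : (|ν| + 1) * |t| ≤ 2 * (|ν| + 1) ^ 2 / c + c * (|t| ^ 2 / 8) := by
      rw [div_add' _ _ _ hc.ne', le_div_iff₀ hc]
      nlinarith [sq_nonneg (c * |t| - 4 * (|ν| + 1))]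
    rw [sq_abs] at hq
    nlinarith [abs_nonneg t, abs_nonneg ν]
  have hbase : IntegrableOn (fun x : ℝ => Real.exp (-x)) (Ioi 0) :=
    (exp_neg_integrableOn_Ioi 0 one_pos).congr_fun (fun x _ => by norm_num) measurableSet_Ioi
  have hint : Integrable (fun t : ℝ =>
      Real.exp (2 * (|ν| + 1) ^ 2 / c) * Real.exp (-|t|)) :=
    (integrable_comp_abs' hbase).const_mul _
  refine hint.mono' ?_ (ae_of_all _ fun t => ?_)
  · exact (Real.continuous_exp.comp (by continuity)).aestronglyMeasurable
  · rw [Real.norm_eq_abs, abs_of_nonneg (Real.exp_pos _).le]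
    exact key t

lemma integral_bessel (ν ξ : ℝ) (hξ : 0 < ξ) :
    ∫ x in Set.Ioi (0 : ℝ), x ^ (ν - 1) * Real.exp (-x - ξ / x) =
      2 * ξ ^ (ν / 2) * besselK ν (2 * Real.sqrt ξ) := by
  set c := Real.sqrt ξ with hcdef
  have hc0 : 0 < c := Real.sqrt_pos.mpr hξ
  have hcc : c * c = ξ := Real.mul_self_sqrt hξ.le
  have himg : (fun t : ℝ => c * Real.exp t) '' Set.univ = Set.Ioi 0 := by
    rw [Set.image_univ]
    ext x
    simp only [Set.mem_range, Set.mem_Ioi]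
    constructor
    · rintro ⟨t, rfl⟩; positivity
    · intro hx
      exact ⟨Real.log (x / c), by
        rw [Real.exp_log (by positivity), mul_div_cancel₀ _ hc0.ne']⟩
  have hinj : Set.InjOn (fun t : ℝ => c * Real.exp t) Set.univ := by
    intro a _ b _ hab
    simpa [hc0.ne'] using hab
  have hcv := integral_image_eq_integral_abs_deriv_smul (f' := fun t => c * Real.exp t)
      MeasurableSet.univ
      (fun t _ => ((Real.hasDerivAt_exp t).const_mul c).hasDerivWithinAt)
      hinj (fun x => x ^ (ν - 1) * Real.exp (-x - ξ / x))
  rw [himg, Measure.restrict_univ] at hcv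
  rw [hcv]
  have h4 : c ^ (ν - 1) * c = ξ ^ (ν / 2) := by
    have e : c ^ (ν - 1) * c = c ^ ν := by
      nth_rewrite 2 [← Real.rpow_one c]
      rw [← Real.rpow_add hc0]
      ring_nf
    rw [e, hcdef, Real.sqrt_eq_rpow, ← Real.rpow_mul hξ.le]
    congr 1
    ring
  have hpt : ∀ t : ℝ, |c * Real.exp t| •
      ((c * Real.exp t) ^ (ν - 1) * Real.exp (-(c * Real.exp t) - ξ / (c * Real.exp t))) =
      ξ ^ (ν / 2) * Real.exp (ν * t - 2 * c * Real.cosh t) := by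
    intro t
    have het : (0 : ℝ) < Real.exp t := Real.exp_pos t
    have h1 : |c * Real.exp t| = c * Real.exp t := abs_of_pos (by positivity)
    have h2 : (c * Real.exp t) ^ (ν - 1) = c ^ (ν - 1) * Real.exp (t * (ν - 1)) := by
      rw [Real.mul_rpow hc0.le het.le, Real.rpow_def_of_pos het, Real.log_exp]
    have h3 : ξ / (c * Real.exp t) = c * Real.exp (-t) := by
      rw [← hcc, Real.exp_neg]
      field_simp
    have hexp : ν * t - 2 * c * ((Real.exp t + Real.exp (-t)) / 2) =
        t * (ν - 1) + t + (-(c * Real.exp t) - c * Real.exp (-t)) := by ring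
    rw [h1, h2, h3, smul_eq_mul, Real.cosh_eq, hexp, Real.exp_add, Real.exp_add, ← h4]
    ring
  simp_rw [hpt]
  rw [integral_const_mul]
  have h1 : Integrable (fun t : ℝ => Real.exp (ν * t - 2 * c * Real.cosh t)) :=
    integrable_exp_mul_sub_cosh ν (2 * c) (by positivity)
  have h2 : Integrable (fun t : ℝ => Real.exp (-ν * t - 2 * c * Real.cosh t)) := by
    have := integrable_exp_mul_sub_cosh (-ν) (2 * c) (by positivity)
    simpa using this
  have hsplit : ∫ t : ℝ, Real.exp (ν * t - 2 * c * Real.cosh t) =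
      (∫ t in Ioi (0 : ℝ), Real.exp (ν * t - 2 * c * Real.cosh t)) +
        ∫ t in Iic (0 : ℝ), Real.exp (ν * t - 2 * c * Real.cosh t) := by
    rw [← integral_add_compl measurableSet_Ioi h1, compl_Ioi]
  have hrefl : ∫ t in Iic (0 : ℝ), Real.exp (ν * t - 2 * c * Real.cosh t) =
      ∫ t in Ioi (0 : ℝ), Real.exp (-ν * t - 2 * c * Real.cosh t) := by
    have h := integral_comp_neg_Ioi (0 : ℝ) (fun t => Real.exp (ν * t - 2 * c * Real.cosh t))
    rw [neg_zero] at h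
    rw [← h]
    refine setIntegral_congr_fun measurableSet_Ioi fun t _ => ?_
    rw [Real.cosh_neg]
    ring_nf
  have hsum : (∫ t in Ioi (0 : ℝ), Real.exp (ν * t - 2 * c * Real.cosh t)) +
      (∫ t in Ioi (0 : ℝ), Real.exp (-ν * t - 2 * c * Real.cosh t)) =
      ∫ t in Ioi (0 : ℝ),
        2 * (Real.exp (-(2 * c) * Real.cosh t) * Real.cosh (ν * t)) := by
    rw [← integral_add h1.integrableOn h2.integrableOn]
    refine setIntegral_congr_fun measurableSet_Ioi fun t _ => ?_
    have e1 : Real.exp (ν * t - 2 * c * Real.cosh t) =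
        Real.exp (ν * t) * Real.exp (-(2 * c) * Real.cosh t) := by
      rw [← Real.exp_add]; congr 1; ring
    have e2 : Real.exp (-ν * t - 2 * c * Real.cosh t) =
        Real.exp (-(ν * t)) * Real.exp (-(2 * c) * Real.cosh t) := by
      rw [← Real.exp_add]; congr 1; ring
    rw [e1, e2, Real.cosh_eq (ν * t)]
    ring
  rw [hsplit, hrefl, hsum, integral_const_mul]
  unfold besselK
  ring

lemma map_mul_gamma_exp_apply (Q : ℕ) (hQ : 1 ≤ Q) (ξ : ℝ) (hξ : 0 < ξ)
    (S : Set ℝ) (hS : MeasurableSet S) (hSpos : ∀ z : ℝ, 0 ≤ z → (z ∈ S ↔ z < ξ)) :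
    ((Measure.map (fun q : ℝ × ℝ => q.1 * q.2)
        ((gammaMeasure Q 1).prod (expMeasure 1))) S).toReal =
      1 - 2 * ξ ^ ((Q : ℝ) / 2) * besselK Q (2 * Real.sqrt ξ) / Real.Gamma Q := by
  have hQ0 : (0 : ℝ) < (Q : ℝ) := by exact_mod_cast hQ
  have hΓ : (0 : ℝ) < Real.Gamma Q := Real.Gamma_pos_of_pos hQ0
  have hmul : Measurable (fun q : ℝ × ℝ => q.1 * q.2) := measurable_fst.mul measurable_snd
  haveI : IsProbabilityMeasure (expMeasure 1) := isProbabilityMeasure_expMeasure one_pos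
  haveI : IsProbabilityMeasure (gammaMeasure Q 1) := isProbabilityMeasure_gammaMeasure hQ0 one_pos
  have hpdfm : Measurable (gammaPDF (Q : ℝ) 1) := (measurable_gammaPDFReal _ _).ennreal_ofReal
  rw [Measure.map_apply hmul hS]
  set T := (fun q : ℝ × ℝ => q.1 * q.2) ⁻¹' S with hTdef
  have hTm : MeasurableSet T := hmul hS
  rw [Measure.prod_apply hTm]
  have heIio0 : expMeasure 1 (Iio 0) = 0 := by
    rw [expMeasure, gammaMeasure, withDensity_apply _ measurableSet_Iio]
    exact lintegral_gammaPDF_of_nonpos le_rfl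
  have hinner : ∀ x : ℝ, 0 < x →
      expMeasure 1 (Prod.mk x ⁻¹' T) = ENNReal.ofReal (1 - Real.exp (-(ξ / x))) := by
    intro x hx
    have hb : 0 < ξ / x := div_pos hξ hx
    have hpt : expMeasure 1 {ξ / x} = 0 := by
      rw [expMeasure, gammaMeasure, withDensity_apply _ (measurableSet_singleton _),
        setLIntegral_measure_zero _ _ (measure_singleton _)]
    have hAeq : Prod.mk x ⁻¹' T ∩ Ici 0 = Ico 0 (ξ / x) := by
      ext y
      simp only [mem_inter_iff, mem_preimage, hTdef, mem_Ico, mem_Ici]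
      constructor
      · rintro ⟨hy1, hy2⟩
        refine ⟨hy2, ?_⟩
        have h := (hSpos (x * y) (by positivity)).mp hy1
        rw [lt_div_iff₀ hx, mul_comm]
        exact h
      · rintro ⟨hy2, hy1⟩
        refine ⟨(hSpos (x * y) (by positivity)).mpr ?_, hy2⟩
        rw [mul_comm]
        exact (lt_div_iff₀ hx).mp hy1
    have h1 : expMeasure 1 (Prod.mk x ⁻¹' T) = expMeasure 1 (Ico 0 (ξ / x)) := by
      apply le_antisymm
      · calc expMeasure 1 (Prod.mk x ⁻¹' T)
            ≤ expMeasure 1 (Ico 0 (ξ / x) ∪ Iio 0) := by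
              apply measure_mono
              intro y hy
              rcases le_or_gt 0 y with h | h
              · exact Or.inl (hAeq ▸ (⟨hy, h⟩ : y ∈ Prod.mk x ⁻¹' T ∩ Ici 0))
              · exact Or.inr h
          _ ≤ expMeasure 1 (Ico 0 (ξ / x)) + expMeasure 1 (Iio 0) := measure_union_le _ _
          _ = expMeasure 1 (Ico 0 (ξ / x)) := by rw [heIio0, add_zero]
      · rw [← hAeq]
        exact measure_mono inter_subset_left
    have h2 : expMeasure 1 (Ico 0 (ξ / x)) = expMeasure 1 (Iic (ξ / x)) := by
      apply le_antisymm
      · exact measure_mono fun y hy => hy.2.le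
      · calc expMeasure 1 (Iic (ξ / x))
            ≤ expMeasure 1 (Ico 0 (ξ / x) ∪ (Iio 0 ∪ {ξ / x})) := by
              apply measure_mono
              intro y (hy : y ≤ ξ / x)
              rcases lt_or_ge y 0 with h | h
              · exact Or.inr (Or.inl h)
              · rcases lt_or_eq_of_le hy with h' | h'
                · exact Or.inl ⟨h, h'⟩
                · exact Or.inr (Or.inr h')
          _ ≤ expMeasure 1 (Ico 0 (ξ / x)) + expMeasure 1 (Iio 0 ∪ {ξ / x}) :=
              measure_union_le _ _
          _ = expMeasure 1 (Ico 0 (ξ / x)) := by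
              rw [measure_union_null heIio0 hpt, add_zero]
    have h3 : expMeasure 1 (Iic (ξ / x)) = ENNReal.ofReal (1 - Real.exp (-(ξ / x))) := by
      rw [expMeasure, gammaMeasure, withDensity_apply _ measurableSet_Iic]
      rw [show gammaPDF 1 1 = exponentialPDF 1 from rfl]
      rw [lintegral_exponentialPDF_eq_antiDeriv one_pos, if_pos hb.le, one_mul]
    rw [h1, h2, h3]
  -- unfold gamma lintegral
  rw [gammaMeasure, lintegral_withDensity_eq_lintegral_mul _
    hpdfm (measurable_measure_prodMk_left hTm)]
  have hIic : ∫⁻ x in Iic (0 : ℝ),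
      (gammaPDF Q 1 * fun x => expMeasure 1 (Prod.mk x ⁻¹' T)) x = 0 := by
    rw [← setLIntegral_congr Iio_ae_eq_Iic]
    rw [setLIntegral_congr_fun measurableSet_Iio
      (fun x (hx : x < 0) => by
        simp only [Pi.mul_apply]
        rw [gammaPDF_of_neg hx, zero_mul])]
    simp
  have htot : ∫⁻ x, (gammaPDF Q 1 * fun x => expMeasure 1 (Prod.mk x ⁻¹' T)) x =
      ∫⁻ x in Ioi (0 : ℝ), gammaPDF Q 1 x * ENNReal.ofReal (1 - Real.exp (-(ξ / x))) := by
    rw [← lintegral_add_compl _ measurableSet_Ioi (μ := volume), compl_Ioi, hIic, add_zero]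
    refine setLIntegral_congr_fun measurableSet_Ioi (fun x hx => ?_)
    simp only [Pi.mul_apply]
    rw [hinner x hx]
  rw [htot]
  -- convert to a real integral
  have hofReal : ∀ x ∈ Ioi (0 : ℝ), gammaPDF Q 1 x * ENNReal.ofReal (1 - Real.exp (-(ξ / x))) =
      ENNReal.ofReal (gammaPDFReal Q 1 x * (1 - Real.exp (-(ξ / x)))) := by
    intro x _
    rw [gammaPDF, ← ENNReal.ofReal_mul (gammaPDFReal_nonneg hQ0 one_pos x)]
  rw [setLIntegral_congr_fun measurableSet_Ioi (fun x hx => hofReal x hx)]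
  have hmg : Measurable fun x : ℝ => gammaPDFReal Q 1 x * (1 - Real.exp (-(ξ / x))) :=
    (measurable_gammaPDFReal Q 1).mul
      (measurable_const.sub ((measurable_const.div measurable_id).neg.exp))
  have hnonneg : 0 ≤ᵐ[volume.restrict (Ioi (0 : ℝ))]
      fun x => gammaPDFReal Q 1 x * (1 - Real.exp (-(ξ / x))) := by
    refine (ae_restrict_iff' measurableSet_Ioi).mpr (ae_of_all _ fun x hx => ?_)
    have h1 : 0 ≤ gammaPDFReal Q 1 x := gammaPDFReal_nonneg hQ0 one_pos x
    have h2 : Real.exp (-(ξ / x)) ≤ 1 := by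
      rw [← Real.exp_zero]
      apply Real.exp_le_exp.mpr
      have := div_pos hξ hx
      linarith
    have h3 : (0 : ℝ) ≤ 1 - Real.exp (-(ξ / x)) := by linarith
    positivity
  rw [← integral_eq_lintegral_of_nonneg_ae hnonneg hmg.aestronglyMeasurable.restrict]
  have hpdf_eq : ∀ x ∈ Ioi (0 : ℝ), gammaPDFReal Q 1 x =
      (1 / Real.Gamma Q) * (x ^ ((Q : ℝ) - 1) * Real.exp (-x)) := by
    intro x hx
    rw [gammaPDFReal, if_pos (le_of_lt hx), Real.one_rpow]
    ring_nf
  have hint1 : IntegrableOn (fun x : ℝ => gammaPDFReal Q 1 x) (Ioi 0) := by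
    have h' : IntegrableOn
        (fun x : ℝ => 1 / Real.Gamma Q * (Real.exp (-x) * x ^ ((Q : ℝ) - 1))) (Ioi 0) :=
      (Real.GammaIntegral_convergent hQ0).const_mul (1 / Real.Gamma Q)
    refine h'.congr_fun (fun x hx => ?_) measurableSet_Ioi
    rw [hpdf_eq x hx]
    ring
  have hint2 : IntegrableOn
      (fun x : ℝ => gammaPDFReal Q 1 x * Real.exp (-(ξ / x))) (Ioi 0) := by
    refine hint1.mono' ?_ ?_
    · exact ((measurable_gammaPDFReal _ _).mul
        ((measurable_const.div measurable_id).neg.exp)).aestronglyMeasurable.restrict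
    · refine (ae_restrict_iff' measurableSet_Ioi).mpr (ae_of_all _ fun x hx => ?_)
      have h1 : 0 ≤ gammaPDFReal Q 1 x := gammaPDFReal_nonneg hQ0 one_pos x
      have h2 : Real.exp (-(ξ / x)) ≤ 1 := by
        rw [← Real.exp_zero]
        apply Real.exp_le_exp.mpr
        have := div_pos hξ hx
        linarith
      rw [Real.norm_eq_abs, abs_of_nonneg (by positivity)]
      nlinarith [Real.exp_pos (-(ξ / x))]
  have hsub : ∫ x in Ioi (0 : ℝ), gammaPDFReal Q 1 x * (1 - Real.exp (-(ξ / x))) =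
      (∫ x in Ioi (0 : ℝ), gammaPDFReal Q 1 x) -
        ∫ x in Ioi (0 : ℝ), gammaPDFReal Q 1 x * Real.exp (-(ξ / x)) := by
    rw [← integral_sub hint1 hint2]
    refine setIntegral_congr_fun measurableSet_Ioi fun x _ => ?_
    ring
  have hgam := integral_rpow_mul_exp_neg_mul_Ioi hQ0 one_pos
  norm_num at hgam
  have hI1 : ∫ x in Ioi (0 : ℝ), gammaPDFReal Q 1 x = 1 := by
    rw [setIntegral_congr_fun measurableSet_Ioi (fun x hx => hpdf_eq x hx),
      integral_const_mul, hgam]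
    field_simp
  have hI2 : ∫ x in Ioi (0 : ℝ), gammaPDFReal Q 1 x * Real.exp (-(ξ / x)) =
      1 / Real.Gamma Q * (2 * ξ ^ ((Q : ℝ) / 2) * besselK Q (2 * Real.sqrt ξ)) := by
    have heq : ∀ x ∈ Ioi (0 : ℝ), gammaPDFReal Q 1 x * Real.exp (-(ξ / x)) =
        1 / Real.Gamma Q * (x ^ ((Q : ℝ) - 1) * Real.exp (-x - ξ / x)) := by
      intro x hx
      rw [hpdf_eq x hx, show -x - ξ / x = -x + -(ξ / x) by ring, Real.exp_add]
      ring
    rw [setIntegral_congr_fun measurableSet_Ioi (fun x hx => heq x hx),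
      integral_const_mul, integral_bessel (Q : ℝ) ξ hξ]
  rw [hsub, hI1, hI2]
  ring

theorem stmt_6 (P Q N : ℕ) (hP : 1 ≤ P) (hQ : 1 ≤ Q) (hN : N = P * Q)
    (α₁ α₂ ρ R ε τ ξ : ℝ) (hα₁ : 0 ≤ α₁) (hα₂ : 0 ≤ α₂) (hα : α₁ ^ 2 + α₂ ^ 2 = 1)
    (hρ : 0 < ρ) (hR : 0 < R) (hε : ε = 2 ^ R - 1)
    (hτ : τ = α₁ ^ 2 - α₂ ^ 2 * ε) (hτpos : 0 < τ) (hξ : ξ = Q * ε / (ρ * τ))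
    {Ω : Type*} [MeasureSpace Ω] [IsProbabilityMeasure (ℙ : Measure Ω)]
    (Z : Fin P → Ω → ℝ)
    (hiid : iIndepFun Z ℙ)
    (hlaw : ∀ p, Measure.map (Z p) ℙ =
      Measure.map (fun q : ℝ × ℝ => q.1 * q.2) ((gammaMeasure Q 1).prod (expMeasure 1))) :
    (ℙ {ω | ∀ p : Fin P,
        Real.logb 2 (1 + α₁ ^ 2 * (Z p ω / Q) / (α₂ ^ 2 * (Z p ω / Q) + 1 / ρ)) < R}).toReal =
      (ξ ^ ((N : ℝ) / 2) / Real.Gamma Q ^ P) *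
        (ξ ^ (-(Q : ℝ) / 2) * Real.Gamma Q - 2 * besselK Q (2 * Real.sqrt ξ)) ^ P := by
  have hQ0 : (0 : ℝ) < (Q : ℝ) := by exact_mod_cast hQ
  have hΓ : (0 : ℝ) < Real.Gamma Q := Real.Gamma_pos_of_pos hQ0
  have hε0 : 0 < ε := by
    rw [hε]
    have : (1 : ℝ) < 2 ^ R :=
      Real.one_lt_rpow_iff_of_pos (by norm_num) |>.mpr (Or.inl ⟨one_lt_two, hR⟩)
    linarith
  have hξ0 : 0 < ξ := by rw [hξ]; positivity
  have hα₁0 : 0 < α₁ ^ 2 := by nlinarith [sq_nonneg α₂, sq_nonneg α₁, hε0.le]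
  -- the one-dimensional event set
  set S : Set ℝ := {z : ℝ |
    Real.logb 2 (1 + α₁ ^ 2 * (z / Q) / (α₂ ^ 2 * (z / Q) + 1 / ρ)) < R} with hSdef
  have hSm : MeasurableSet S := by
    have hg : Measurable fun z : ℝ =>
        1 + α₁ ^ 2 * (z / Q) / (α₂ ^ 2 * (z / Q) + 1 / ρ) := by fun_prop
    have hlogb : Measurable fun z : ℝ =>
        Real.logb 2 (1 + α₁ ^ 2 * (z / Q) / (α₂ ^ 2 * (z / Q) + 1 / ρ)) :=
      (Real.measurable_log.comp hg).div_const (Real.log 2)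
    exact measurableSet_lt hlogb measurable_const
  have hSpos : ∀ z : ℝ, 0 ≤ z → (z ∈ S ↔ z < ξ) := by
    intro z hz
    have hw0 : 0 ≤ z / Q := by positivity
    have hD : 0 < α₂ ^ 2 * (z / Q) + 1 / ρ := by positivity
    have harg : 0 < 1 + α₁ ^ 2 * (z / Q) / (α₂ ^ 2 * (z / Q) + 1 / ρ) := by positivity
    rw [hSdef, Set.mem_setOf_eq, Real.logb_lt_iff_lt_rpow one_lt_two harg,
      show (2 : ℝ) ^ R = 1 + ε by rw [hε]; ring]
    have e0 : (1 + α₁ ^ 2 * (z / Q) / (α₂ ^ 2 * (z / Q) + 1 / ρ) < 1 + ε) ↔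
        α₁ ^ 2 * (z / Q) / (α₂ ^ 2 * (z / Q) + 1 / ρ) < ε := by
      constructor <;> intro h <;> linarith
    rw [e0, div_lt_iff₀ hD]
    have e1 : α₁ ^ 2 * (z / Q) < ε * (α₂ ^ 2 * (z / Q) + 1 / ρ) ↔
        τ * (z / Q) < ε / ρ := by
      rw [hτ]
      constructor <;> intro h <;> (ring_nf at h ⊢; linarith)
    rw [e1]
    have e2 : τ * (z / Q) < ε / ρ ↔ z < ξ := by
      rw [hξ, lt_div_iff₀ (show (0 : ℝ) < ρ * τ by positivity),
        mul_div_assoc' τ z Q, div_lt_div_iff₀ hQ0 hρ]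
      constructor <;> intro h <;> (ring_nf at h ⊢; linarith)
    exact e2
  -- independence and laws
  set ν : Measure ℝ := Measure.map (fun q : ℝ × ℝ => q.1 * q.2)
    ((gammaMeasure Q 1).prod (expMeasure 1)) with hνdef
  have hmul : Measurable (fun q : ℝ × ℝ => q.1 * q.2) := measurable_fst.mul measurable_snd
  haveI : IsProbabilityMeasure (expMeasure 1) := isProbabilityMeasure_expMeasure one_pos
  haveI : IsProbabilityMeasure (gammaMeasure Q 1) := isProbabilityMeasure_gammaMeasure hQ0 one_pos
  haveI hνprob : IsProbabilityMeasure ν := Measure.isProbabilityMeasure_map hmul.aemeasurable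
  have hZae : ∀ p, AEMeasurable (Z p) ℙ := by
    intro p
    by_contra h
    have h1 := hlaw p
    rw [Measure.map_of_not_aemeasurable h] at h1
    have h2 := congrArg (fun μ : Measure ℝ => μ Set.univ) h1
    simp only [Measure.coe_zero, Pi.zero_apply] at h2
    rw [measure_univ] at h2
    exact zero_ne_one h2
  have hEvent : {ω | ∀ p : Fin P,
      Real.logb 2 (1 + α₁ ^ 2 * (Z p ω / Q) / (α₂ ^ 2 * (Z p ω / Q) + 1 / ρ)) < R} =
      ⋂ p, Z p ⁻¹' S := by
    ext ω
    simp only [Set.mem_setOf_eq, Set.mem_iInter, Set.mem_preimage, hSdef]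
  rw [hEvent]
  have hindep := (iIndepFun_iff_measure_inter_preimage_eq_mul.mp hiid) Finset.univ
    (sets := fun _ => S) (fun i _ => hSm)
  rw [show (⋂ i ∈ Finset.univ, Z i ⁻¹' S) = ⋂ p, Z p ⁻¹' S by simp] at hindep
  rw [hindep]
  have hone : ∀ p : Fin P, ℙ (Z p ⁻¹' S) = ν S := by
    intro p
    rw [← Measure.map_apply_of_aemeasurable (hZae p) hSm, hlaw p]
  simp_rw [hone]
  rw [Finset.prod_const, Finset.card_univ, Fintype.card_fin, ENNReal.toReal_pow]
  rw [map_mul_gamma_exp_apply Q hQ ξ hξ0 S hSm hSpos]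
  -- final algebra
  have hmulinv : ξ ^ ((Q : ℝ) / 2) * ξ ^ (-(Q : ℝ) / 2) = 1 := by
    rw [← Real.rpow_add hξ0, show (Q : ℝ) / 2 + -(Q : ℝ) / 2 = 0 by ring, Real.rpow_zero]
  have hξN : ξ ^ ((N : ℝ) / 2) = (ξ ^ ((Q : ℝ) / 2)) ^ P := by
    rw [← Real.rpow_natCast (ξ ^ ((Q : ℝ) / 2)) P, ← Real.rpow_mul hξ0.le, hN]
    push_cast
    congr 1
    ring
  rw [hξN, ← div_pow, ← mul_pow]
  congr 1
  field_simp
  rw [neg_div] at hmulinv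
  linear_combination (-Real.Gamma Q) * hmulinv
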